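/- Let D be a domain with quotient field K. The set of left integer-valued polynomials Int^ℓ = {f ∈ (T_n(K))[x] : f(C)_ℓ ∈ T_n(D) for all C ∈ T_n(D)}, where f(C)_ℓ = Σ_k C^k F_k, is a subring of (T_n(K))[x]. -/
import Mathlib

section Aux
variable {n : ℕ} {K : Type*} [Field K]

noncomputable def lv (f : Polynomial (Matrix (Fin n) (Fin n) K))
    (C : Matrix (Fin n) (Fin n) K) : Matrix (Fin n) (Fin n) K :=
  f.sum fun k a => C ^ k * a

lemma lv_def (f : Polynomial (Matrix (Fin n) (Fin n) K)) (C) :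
    lv f C = ∑ k ∈ f.support, C ^ k * f.coeff k := rfl

lemma lv_zero (C : Matrix (Fin n) (Fin n) K) : lv (0 : Polynomial _) C = 0 :=
  Polynomial.sum_zero_index _

lemma lv_monomial (k : ℕ) (A : Matrix (Fin n) (Fin n) K) (C) :
    lv (Polynomial.monomial k A) C = C ^ k * A :=
  Polynomial.sum_monomial_index _ _ (by simp)

lemma lv_one (C : Matrix (Fin n) (Fin n) K) : lv 1 C = 1 := by
  rw [← Polynomial.monomial_zero_one, lv_monomial]; simp

lemma lv_add (f g : Polynomial (Matrix (Fin n) (Fin n) K)) (C) :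
    lv (f + g) C = lv f C + lv g C :=
  Polynomial.sum_add_index f g _ (fun k => by simp) (fun k b₁ b₂ => by rw [mul_add])

lemma lv_neg (f : Polynomial (Matrix (Fin n) (Fin n) K)) (C) :
    lv (-f) C = -lv f C := by
  have h : lv (-f) C + lv f C = 0 := by rw [← lv_add]; simp [lv_zero]
  exact eq_neg_of_add_eq_zero_left h

lemma lv_mul_monomial (f : Polynomial (Matrix (Fin n) (Fin n) K)) (j : ℕ)
    (B : Matrix (Fin n) (Fin n) K) (C) :
    lv (f * Polynomial.monomial j B) C = C ^ j * (lv f C * B) := by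
  induction f using Polynomial.induction_on' with
  | add p q hp hq => rw [add_mul, lv_add, hp, hq, lv_add, add_mul, mul_add]
  | monomial i A =>
      rw [Polynomial.monomial_mul_monomial, lv_monomial, lv_monomial, pow_add,
        pow_mul_comm, mul_assoc, mul_assoc]

lemma lv_mul (f g : Polynomial (Matrix (Fin n) (Fin n) K)) (C) :
    lv (f * g) C = ∑ j ∈ g.support, C ^ j * (lv f C * g.coeff j) := by
  have : lv (f * g) C = g.sum fun j B => C ^ j * (lv f C * B) := by
    induction g using Polynomial.induction_on' with
    | add p q hp hq =>
        rw [mul_add, lv_add, hp, hq,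
          Polynomial.sum_add_index p q _ (fun k => by simp) (fun k b₁ b₂ => by rw [mul_add, mul_add])]
    | monomial j B =>
        rw [lv_mul_monomial, Polynomial.sum_monomial_index _ _ (by simp)]
  exact this

lemma lv_zero_left (g : Polynomial (Matrix (Fin n) (Fin n) K)) :
    lv g (0 : Matrix (Fin n) (Fin n) K) = g.coeff 0 := by
  rw [lv]
  rw [Polynomial.sum]
  rw [Finset.sum_eq_single 0 (fun j _ hj => by rw [zero_pow hj, zero_mul])
    (fun h => by rw [Polynomial.notMem_support_iff.mp h, mul_zero])]
  simp


/-- Upper triangular matrices with entries in a subring `S` of `K`. -/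
def TS (S : Subring K) : Subring (Matrix (Fin n) (Fin n) K) where
  carrier := {C | C.BlockTriangular id ∧ ∀ a b, C a b ∈ S}
  zero_mem' := ⟨Matrix.blockTriangular_zero, fun a b => zero_mem S⟩
  one_mem' := ⟨Matrix.blockTriangular_one, fun a b => by
    rw [Matrix.one_apply]; split
    · exact one_mem S
    · exact zero_mem S⟩
  add_mem' := fun hA hB => ⟨hA.1.add hB.1, fun a b => add_mem (hA.2 a b) (hB.2 a b)⟩
  neg_mem' := fun hA => ⟨hA.1.neg, fun a b => neg_mem (hA.2 a b)⟩
  mul_mem' := fun hA hB => ⟨hA.1.mul hB.1, fun a b => by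
    rw [Matrix.mul_apply]; exact sum_mem fun c _ => mul_mem (hA.2 a c) (hB.2 c b)⟩

/-- `C` with all columns of index `≥ m` zeroed out. -/
def trunc (C : Matrix (Fin n) (Fin n) K) (m : ℕ) : Matrix (Fin n) (Fin n) K :=
  Matrix.of fun i j => if (j : ℕ) < m then C i j else 0

/-- `C` with columns of index `> c` zeroed out, except column `d`, which is a
copy of column `c` of `C`. -/
def dup (C : Matrix (Fin n) (Fin n) K) (c d : Fin n) : Matrix (Fin n) (Fin n) K :=
  Matrix.of fun i j => if (j : ℕ) ≤ (c : ℕ) then C i j else if j = d then C i c else 0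

variable {S : Subring K}

lemma trunc_mem {C : Matrix (Fin n) (Fin n) K} (hC : C ∈ (TS S : Subring _)) (m : ℕ) :
    trunc C m ∈ (TS S : Subring _) := by
  refine ⟨fun i j hij => ?_, fun a b => ?_⟩
  · simp only [trunc, Matrix.of_apply]
    rw [hC.1 hij]; split <;> rfl
  · simp only [trunc, Matrix.of_apply]
    split
    · exact hC.2 a b
    · exact zero_mem S

lemma dup_mem {C : Matrix (Fin n) (Fin n) K} (hC : C ∈ (TS S : Subring _)) {c d : Fin n}
    (hcd : c ≤ d) : dup C c d ∈ (TS S : Subring _) := by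
  refine ⟨fun i j hij => ?_, fun a b => ?_⟩
  · simp only [dup, Matrix.of_apply]
    split
    · exact hC.1 hij
    · split
      · rename_i h1 h2
        subst h2
        exact hC.1 (lt_of_le_of_lt hcd hij)
      · rfl
  · simp only [dup, Matrix.of_apply]
    split
    · exact hC.2 a b
    · split
      · exact hC.2 a c
      · exact zero_mem S

section Pow
variable {C : Matrix (Fin n) (Fin n) K}

lemma trunc_pow (hC : C.BlockTriangular id) (m j : ℕ) :
    ∀ a e, (trunc C m ^ (j + 1)) a e = if (e : ℕ) < m then (C ^ (j + 1)) a e else 0 := by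
  induction j with
  | zero => intro a e; rw [pow_one, pow_one]; rfl
  | succ j ih =>
    intro a e
    rw [pow_succ, pow_succ C, Matrix.mul_apply, Matrix.mul_apply]
    by_cases he : (e : ℕ) < m
    · rw [if_pos he]
      refine Finset.sum_congr rfl fun i _ => ?_
      rw [ih a i]
      simp only [trunc, Matrix.of_apply, if_pos he]
      by_cases hi : (i : ℕ) < m
      · rw [if_pos hi]
      · rw [if_neg hi, zero_mul, hC (show id e < id i from by
          simp only [id]; rw [Fin.lt_def]; omega), mul_zero]
    · rw [if_neg he]
      refine Finset.sum_eq_zero fun i _ => ?_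
      simp only [trunc, Matrix.of_apply, if_neg he, mul_zero]

lemma dup_pow (hC : C.BlockTriangular id) {c d : Fin n} (hcd : c ≤ d) (j : ℕ) :
    ∀ a e, (dup C c d ^ (j + 1)) a e =
      if (e : ℕ) ≤ (c : ℕ) then (C ^ (j + 1)) a e
      else if e = d then (C ^ (j + 1)) a c else 0 := by
  induction j with
  | zero => intro a e; rw [pow_one, pow_one]; rfl
  | succ j ih =>
    intro a e
    rw [pow_succ, Matrix.mul_apply]
    by_cases he : (e : ℕ) ≤ (c : ℕ)
    · rw [if_pos he, pow_succ C, Matrix.mul_apply]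
      refine Finset.sum_congr rfl fun i _ => ?_
      rw [ih a i]
      simp only [dup, Matrix.of_apply, if_pos he]
      by_cases hi : (i : ℕ) ≤ (c : ℕ)
      · rw [if_pos hi]
      · rw [if_neg hi]
        have hie : C i e = 0 := hC (show id e < id i from by
          simp only [id]; rw [Fin.lt_def]; omega)
        rw [hie, mul_zero, mul_zero]
    · rw [if_neg he]
      by_cases hed : e = d
      · rw [if_pos hed, pow_succ C, Matrix.mul_apply]
        refine Finset.sum_congr rfl fun i _ => ?_
        rw [ih a i]
        have h1 : dup C c d i e = C i c := by
          simp only [dup, Matrix.of_apply, if_neg he]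
          rw [if_pos hed]
        rw [h1]
        by_cases hi : (i : ℕ) ≤ (c : ℕ)
        · rw [if_pos hi]
        · rw [if_neg hi]
          have hic : C i c = 0 := hC (show id c < id i from by
            simp only [id]; rw [Fin.lt_def]; omega)
          rw [hic, mul_zero, mul_zero]
      · rw [if_neg hed]
        refine Finset.sum_eq_zero fun i _ => ?_
        have h1 : dup C c d i e = 0 := by
          simp only [dup, Matrix.of_apply, if_neg he]
          rw [if_neg hed]
        rw [h1, mul_zero]
end Pow

section Key
variable {S : Subring K} {C : Matrix (Fin n) (Fin n) K}

lemma key_aux (hC : C.BlockTriangular id) {c d : Fin n} (hcd : c ≤ d) (m₀ : ℕ)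
    (hm : ∀ e : Fin n, ((e : ℕ) < m₀ ↔ ((e : ℕ) ≤ (c : ℕ) ∧ e ≠ d))) (k : ℕ) (a e : Fin n) :
    (dup C c d ^ (k + 1)) a e - (trunc C m₀ ^ (k + 1)) a e
      = if e = d then (C ^ (k + 1)) a c else 0 := by
  rw [dup_pow hC hcd k a e, trunc_pow hC m₀ k a e]
  by_cases he : (e : ℕ) ≤ (c : ℕ)
  · rw [if_pos he]
    by_cases hed : e = d
    · have hec : e = c := by
        have h1 := Fin.le_def.mp hcd
        have h2 : (d : ℕ) = (e : ℕ) := by rw [hed]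
        apply Fin.ext
        omega
      have h3 : ¬ ((c : ℕ) < m₀) := fun h => ((hm c).mp h).2 (by rw [← hec, hed])
      rw [if_pos hed, hec, if_neg h3, sub_zero]
    · rw [if_pos ((hm e).mpr ⟨he, hed⟩), sub_self, if_neg hed]
  · rw [if_neg he]
    have h2 : ¬ (e : ℕ) < m₀ := fun h => he ((hm e).mp h).1
    rw [if_neg h2, sub_zero]

lemma key {g : Polynomial (Matrix (Fin n) (Fin n) K)}
    (hC : C ∈ (TS S : Subring (Matrix (Fin n) (Fin n) K)))
    (hg : ∀ C' ∈ (TS S : Subring (Matrix (Fin n) (Fin n) K)), lv g C' ∈ (TS S : Subring (Matrix (Fin n) (Fin n) K)))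
    {c d : Fin n} (hcd : c ≤ d) (a b : Fin n) :
    (∑ j ∈ g.support, (C ^ j) a c * (g.coeff j) d b) ∈ S := by
  classical
  set m₀ : ℕ := if c = d then (c : ℕ) else (c : ℕ) + 1 with hm₀
  have hm : ∀ e : Fin n, ((e : ℕ) < m₀ ↔ ((e : ℕ) ≤ (c : ℕ) ∧ e ≠ d)) := by
    intro e
    by_cases hcd' : c = d
    · rw [hm₀, if_pos hcd']
      subst hcd'
      constructor
      · intro h; exact ⟨le_of_lt h, fun hed => by rw [hed] at h; omega⟩
      · rintro ⟨h1, h2⟩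
        have : (e : ℕ) ≠ (c : ℕ) := fun h => h2 (Fin.ext h)
        omega
    · rw [hm₀, if_neg hcd']
      have hlt : (c : ℕ) < (d : ℕ) :=
        lt_of_le_of_ne (Fin.le_def.mp hcd) (fun h => hcd' (Fin.ext h))
      constructor
      · intro h
        refine ⟨by omega, fun hed => ?_⟩
        rw [hed] at h; omega
      · rintro ⟨h1, _⟩; omega
  have hU := hg _ (dup_mem hC hcd)
  have hV := hg _ (trunc_mem hC m₀)
  have hG0 : ∀ x y, (g.coeff 0) x y ∈ S := by
    have h0 := hg 0 (zero_mem _)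
    rw [lv_zero_left] at h0
    exact h0.2
  have hsplit : (∑ j ∈ g.support, (C ^ j) a c * (g.coeff j) d b)
      = (∑ j ∈ g.support,
          ((dup C c d ^ j * g.coeff j) a b - (trunc C m₀ ^ j * g.coeff j) a b))
        + ∑ j ∈ g.support, (if j = 0 then (C ^ j) a c * (g.coeff j) d b else 0) := by
    rw [← Finset.sum_add_distrib]
    refine Finset.sum_congr rfl fun j _ => ?_
    cases j with
    | zero =>
        rw [if_pos rfl]
        simp only [pow_zero, sub_self, zero_add]
    | succ k =>
        rw [if_neg k.succ_ne_zero, add_zero, Matrix.mul_apply, Matrix.mul_apply,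
          ← Finset.sum_sub_distrib]
        rw [Finset.sum_congr rfl (fun e _ => by
          rw [← sub_mul, key_aux hC.1 hcd m₀ hm k a e])]
        simp only [ite_mul, zero_mul, Finset.sum_ite_eq', Finset.mem_univ, if_pos]
  rw [hsplit]
  refine add_mem ?_ ?_
  · have h1 : (∑ j ∈ g.support,
        ((dup C c d ^ j * g.coeff j) a b - (trunc C m₀ ^ j * g.coeff j) a b))
      = (lv g (dup C c d)) a b - (lv g (trunc C m₀)) a b := by
      rw [lv_def, lv_def, Matrix.sum_apply, Matrix.sum_apply, ← Finset.sum_sub_distrib]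
    rw [h1]
    exact sub_mem (hU.2 a b) (hV.2 a b)
  · rw [Finset.sum_ite_eq' g.support 0 (fun j => (C ^ j) a c * (g.coeff j) d b)]
    split
    · rw [pow_zero, Matrix.one_apply]
      split
      · rw [one_mul]; exact hG0 d b
      · rw [zero_mul]; exact zero_mem S
    · exact zero_mem S

end Key

section Key2
variable {S : Subring K}

lemma lv_mem {p : Polynomial (Matrix (Fin n) (Fin n) K)}
    (hp : ∀ k, p.coeff k ∈ (TS S : Subring (Matrix (Fin n) (Fin n) K)))
    {C} (hC : C ∈ (TS S : Subring (Matrix (Fin n) (Fin n) K))) :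
    lv p C ∈ (TS S : Subring (Matrix (Fin n) (Fin n) K)) := by
  rw [lv_def]; exact sum_mem fun j _ => mul_mem (pow_mem hC j) (hp j)

lemma mem_TS_top {C : Matrix (Fin n) (Fin n) K} (hC : C.BlockTriangular id) :
    C ∈ (TS ⊤ : Subring (Matrix (Fin n) (Fin n) K)) :=
  ⟨hC, fun _ _ => Subring.mem_top _⟩

lemma key_mul {f g : Polynomial (Matrix (Fin n) (Fin n) K)}
    (hft : ∀ k, (f.coeff k).BlockTriangular id)
    (hf : ∀ C' ∈ (TS S : Subring (Matrix (Fin n) (Fin n) K)), lv f C' ∈ (TS S : Subring (Matrix (Fin n) (Fin n) K)))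
    (hg : ∀ C' ∈ (TS S : Subring (Matrix (Fin n) (Fin n) K)), lv g C' ∈ (TS S : Subring (Matrix (Fin n) (Fin n) K)))
    {C} (hC : C ∈ (TS S : Subring (Matrix (Fin n) (Fin n) K))) (a b : Fin n) :
    (lv (f * g) C) a b ∈ S := by
  classical
  set A := lv f C with hA'
  have hA : A ∈ (TS S : Subring (Matrix (Fin n) (Fin n) K)) := hf C hC
  rw [lv_mul]
  have hent : (∑ j ∈ g.support, C ^ j * (A * g.coeff j)) a b
      = ∑ c, ∑ d, A c d * ∑ j ∈ g.support, (C ^ j) a c * (g.coeff j) d b := by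
    rw [Matrix.sum_apply]
    have h1 : ∀ j, (C ^ j * (A * g.coeff j)) a b
        = ∑ c, ∑ d, (C ^ j) a c * (A c d * (g.coeff j) d b) := by
      intro j
      rw [Matrix.mul_apply]
      refine Finset.sum_congr rfl fun c _ => ?_
      rw [Matrix.mul_apply, Finset.mul_sum]
    rw [Finset.sum_congr rfl fun j _ => h1 j, Finset.sum_comm]
    refine Finset.sum_congr rfl fun c _ => ?_
    rw [Finset.sum_comm]
    refine Finset.sum_congr rfl fun d _ => ?_
    rw [Finset.mul_sum]
    refine Finset.sum_congr rfl fun j _ => ?_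
    ring
  rw [hent]
  refine sum_mem fun c _ => sum_mem fun d _ => ?_
  by_cases hcd : c ≤ d
  · exact mul_mem (hA.2 c d) (key hC hg hcd a b)
  · rw [hA.1 (show id d < id c from not_le.mp hcd), zero_mul]
    exact zero_mem S

end Key2

end Aux


/-- `f` is a left integer-valued polynomial on `Tₙ(D)`: `f ∈ (Tₙ(K))[x]` (all
coefficients upper triangular) and `f(C)_ℓ = Σ_k C^k F_k ∈ Tₙ(D)` for every
`C ∈ Tₙ(D)` (upper triangular with entries in the image of `D`). -/
def IsLeftIntValued (n : ℕ) (D K : Type*) [CommRing D] [IsDomain D] [Field K]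
    [Algebra D K] [IsFractionRing D K]
    (f : Polynomial (Matrix (Fin n) (Fin n) K)) : Prop :=
  (∀ k, (f.coeff k).BlockTriangular id) ∧
    ∀ C : Matrix (Fin n) (Fin n) K, C.BlockTriangular id →
      (∀ a b, C a b ∈ Set.range (algebraMap D K)) →
      (∑ k ∈ f.support, C ^ k * f.coeff k).BlockTriangular id ∧
        ∀ a b, (∑ k ∈ f.support, C ^ k * f.coeff k) a b ∈ Set.range (algebraMap D K)

section Bridge

variable {n : ℕ} {D K : Type*} [CommRing D] [IsDomain D] [Field K]
    [Algebra D K] [IsFractionRing D K]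

lemma mem_range_iff (x : K) :
    x ∈ Set.range (algebraMap D K) ↔ x ∈ (algebraMap D K).range := by
  rw [RingHom.mem_range, Set.mem_range]

lemma iv_iff (f : Polynomial (Matrix (Fin n) (Fin n) K)) :
    IsLeftIntValued n D K f ↔
      (∀ k, (f.coeff k).BlockTriangular id) ∧
        ∀ C ∈ (TS (algebraMap D K).range : Subring (Matrix (Fin n) (Fin n) K)),
          lv f C ∈ (TS (algebraMap D K).range : Subring (Matrix (Fin n) (Fin n) K)) := by
  constructor
  · rintro ⟨h1, h2⟩
    refine ⟨h1, fun C hC => ?_⟩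
    obtain ⟨h3, h4⟩ := h2 C hC.1 (fun a b => (mem_range_iff _).mpr (hC.2 a b))
    exact ⟨by rw [lv_def]; exact h3, fun a b => by
      rw [lv_def]; exact (mem_range_iff _).mp (h4 a b)⟩
  · rintro ⟨h1, h2⟩
    refine ⟨h1, fun C hC1 hC2 => ?_⟩
    obtain ⟨h3, h4⟩ := h2 C ⟨hC1, fun a b => (mem_range_iff _).mp (hC2 a b)⟩
    rw [lv_def] at h3 h4
    exact ⟨h3, fun a b => (mem_range_iff _).mpr (h4 a b)⟩

end Bridge

/-- The set of left integer-valued polynomials on `Tₙ(D)` with coefficients in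
`Tₙ(K)` is a subring of `(Tₙ(K))[x]`. -/
theorem stmt18 (n : ℕ) (D K : Type*) [CommRing D] [IsDomain D] [Field K]
    [Algebra D K] [IsFractionRing D K] :
    IsLeftIntValued n D K 0 ∧ IsLeftIntValued n D K 1 ∧
    (∀ f g, IsLeftIntValued n D K f → IsLeftIntValued n D K g →
      IsLeftIntValued n D K (f + g) ∧ IsLeftIntValued n D K (f * g)) ∧
    (∀ f, IsLeftIntValued n D K f → IsLeftIntValued n D K (-f)) := by
  classical
  set S : Subring K := (algebraMap D K).range with hS
  refine ⟨?_, ?_, ?_, ?_⟩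
  · rw [iv_iff]
    exact ⟨fun k => by rw [Polynomial.coeff_zero]; exact Matrix.blockTriangular_zero,
      fun C hC => by rw [lv_zero]; exact zero_mem _⟩
  · rw [iv_iff]
    refine ⟨fun k => ?_, fun C hC => by rw [lv_one]; exact one_mem _⟩
    rw [Polynomial.coeff_one]
    split
    · exact Matrix.blockTriangular_one
    · exact Matrix.blockTriangular_zero
  · intro f g hf hg
    rw [iv_iff] at hf hg
    obtain ⟨hf1, hf2⟩ := hf
    obtain ⟨hg1, hg2⟩ := hg
    constructor
    · rw [iv_iff]
      exact ⟨fun k => by rw [Polynomial.coeff_add]; exact (hf1 k).add (hg1 k),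
        fun C hC => by rw [lv_add]; exact add_mem (hf2 C hC) (hg2 C hC)⟩
    · rw [iv_iff]
      have hcoeff : ∀ k, ((f * g).coeff k).BlockTriangular id := by
        intro k
        have : (f * g).coeff k ∈ (TS (⊤ : Subring K) : Subring (Matrix (Fin n) (Fin n) K)) := by
          rw [Polynomial.coeff_mul]
          exact sum_mem fun ij _ =>
            mul_mem (mem_TS_top (hf1 ij.1)) (mem_TS_top (hg1 ij.2))
        exact this.1
      refine ⟨hcoeff, fun C hC => ?_⟩
      refine ⟨?_, fun a b => key_mul hf1 hf2 hg2 hC a b⟩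
      exact (lv_mem (fun k => mem_TS_top (hcoeff k)) (mem_TS_top hC.1)).1
  · intro f hf
    rw [iv_iff] at hf ⊢
    exact ⟨fun k => by rw [Polynomial.coeff_neg]; exact (hf.1 k).neg,
      fun C hC => by rw [lv_neg]; exact neg_mem (hf.2 C hC)⟩
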